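/- For all ℓ ≥ 2 and n ≥ 2, the number of irreducible n-partitions of Fin ℓ in which 0 and ℓ−1 lie in different blocks equals Σ_{j=0}^{ℓ−2} Σ_{m=0}^{n−2} S(j, m) · I(ℓ−j−1, n−m) · (n−m−1). -/

import Mathlib

/-- An `n`-partition of `Fin ℓ` is reducible if some nonempty proper subset of its blocks
has union `{i : Fin ℓ | (i : ℕ) < j}` for some `1 ≤ j < ℓ`. -/
def Reducible {ℓ : ℕ} (P : Finpartition (Finset.univ : Finset (Fin ℓ))) : Prop :=
  ∃ j : ℕ, 1 ≤ j ∧ j < ℓ ∧ ∃ B : Finset (Finset (Fin ℓ)),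
    B.Nonempty ∧ B ⊂ P.parts ∧ B.sup id = Finset.univ.filter (fun i : Fin ℓ => (i : ℕ) < j)

/-- `S ℓ n`: the number of `n`-partitions of `Fin ℓ` (Stirling number of the second kind). -/
noncomputable def S (ℓ n : ℕ) : ℕ :=
  Nat.card {P : Finpartition (Finset.univ : Finset (Fin ℓ)) // P.parts.card = n}

/-- `I ℓ n`: the number of irreducible `n`-partitions of `Fin ℓ`. -/
noncomputable def I (ℓ n : ℕ) : ℕ :=
  Nat.card {P : Finpartition (Finset.univ : Finset (Fin ℓ)) // P.parts.card = n ∧ ¬ Reducible P}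

open Finset

section general
variable {α : Type*} [DecidableEq α] [Fintype α]

lemma parts_eq_image_part (P : Finpartition (univ : Finset α)) :
    P.parts = univ.image P.part := by
  ext b
  simp only [mem_image, mem_univ, true_and]
  constructor
  · intro hb
    obtain ⟨a, ha⟩ := P.nonempty_of_mem_parts hb
    exact ⟨a, P.part_eq_of_mem hb ha⟩
  · rintro ⟨a, rfl⟩
    exact P.part_mem.2 (mem_univ a)

lemma eq_of_part_eq {P Q : Finpartition (univ : Finset α)}
    (h : ∀ a, P.part a = Q.part a) : P = Q := by
  ext b
  rw [parts_eq_image_part, parts_eq_image_part]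
  simp [h]

lemma mem_part_comm (P : Finpartition (univ : Finset α)) {a b : α} :
    a ∈ P.part b ↔ b ∈ P.part a := by
  rw [P.mem_part_iff_part_eq_part (mem_univ a) (mem_univ b),
    P.mem_part_iff_part_eq_part (mem_univ b) (mem_univ a), eq_comm]

omit [DecidableEq α] in
lemma card_image_univ_eq {β γ : Type*} [DecidableEq β] [DecidableEq γ]
    {f : α → β} {g : α → γ} (h : ∀ a b, f a = f b ↔ g a = g b) :
    (univ.image f).card = (univ.image g).card := by
  classical
  apply Finset.card_bij (fun p _ => g (Classical.choose (show ∃ a, f a = p from by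
    rename_i hp
    simpa using hp)))
  · intro p hp
    simp
  · intro p hp p' hp' hgg
    have h1 := Classical.choose_spec (show ∃ a, f a = p from by simpa using hp)
    have h2 := Classical.choose_spec (show ∃ a, f a = p' from by simpa using hp')
    rw [← h1, ← h2]
    exact (h _ _).2 hgg
  · intro c hc
    simp only [mem_image, mem_univ, true_and] at hc
    obtain ⟨a, rfl⟩ := hc
    refine ⟨f a, by simp, ?_⟩
    have h1 := Classical.choose_spec (show ∃ b, f b = f a from ⟨a, rfl⟩)
    exact ((h _ _).1 h1)

variable {β : Type*} [DecidableEq β]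

instance kerdec (g : α → β) : DecidableRel (Setoid.ker g).r := fun a b =>
  inferInstanceAs (Decidable (g a = g b))

lemma mem_part_ker (g : α → β) (a b : α) :
    b ∈ (Finpartition.ofSetoid (Setoid.ker g)).part a ↔ g a = g b :=
  Finpartition.mem_part_ofSetoid_iff_rel

lemma part_ker_eq_iff (g : α → β) (a b : α) :
    (Finpartition.ofSetoid (Setoid.ker g)).part a = (Finpartition.ofSetoid (Setoid.ker g)).part b
      ↔ g a = g b := by
  rw [← (Finpartition.ofSetoid (Setoid.ker g)).mem_part_iff_part_eq_part (mem_univ a) (mem_univ b),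
    mem_part_ker, eq_comm]

lemma card_parts_ker (g : α → β) :
    (Finpartition.ofSetoid (Setoid.ker g)).parts.card = (univ.image g).card := by
  rw [parts_eq_image_part]
  exact card_image_univ_eq (fun a b => part_ker_eq_iff g a b)



/-- blocks do not straddle position `j`. -/
def Cut {L : ℕ} (q : Finpartition (Finset.univ : Finset (Fin L))) (j : ℕ) : Prop :=
  ∀ x y : Fin L, x ∈ q.part y → (y : ℕ) < j → (x : ℕ) < j

lemma reducible_iff {L : ℕ} (q : Finpartition (Finset.univ : Finset (Fin L))) :
    Reducible q ↔ ∃ j : ℕ, 1 ≤ j ∧ j < L ∧ Cut q j := by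
  constructor
  · rintro ⟨j, h1, h2, B, hBne, hBsub, hBsup⟩
    refine ⟨j, h1, h2, fun x y hxy hyj => ?_⟩
    -- y ∈ B.sup id
    have hy : y ∈ B.sup id := by
      rw [hBsup]; simp [hyj]
    rw [Finset.mem_sup] at hy
    obtain ⟨c, hcB, hyc⟩ := hy
    have hceq : c = q.part y :=
      q.eq_of_mem_parts (hBsub.1 hcB) (q.part_mem.2 (mem_univ y)) hyc (q.mem_part (mem_univ y))
    have hxc : x ∈ c := hceq ▸ hxy
    have : x ∈ B.sup id := Finset.mem_sup.2 ⟨c, hcB, hxc⟩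
    rw [hBsup] at this
    simpa using this
  · rintro ⟨j, h1, h2, hcut⟩
    refine ⟨j, h1, h2, q.parts.filter (fun b => ∀ x ∈ b, (x : ℕ) < j), ?_, ?_, ?_⟩
    · -- nonempty : the part of 0
      have h0 : (0 : ℕ) < L := by omega
      refine ⟨q.part ⟨0, h0⟩, mem_filter.2 ⟨q.part_mem.2 (mem_univ _), fun x hx => ?_⟩⟩
      exact hcut x ⟨0, h0⟩ hx (by simp; omega)
    · refine Finset.ssubset_iff_of_subset (filter_subset _ _) |>.2 ?_
      refine ⟨q.part ⟨j, h2⟩, q.part_mem.2 (mem_univ _), ?_⟩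
      simp only [mem_filter, not_and, not_forall]
      intro _
      exact ⟨⟨j, h2⟩, q.mem_part (mem_univ _), by simp⟩
    · ext i
      simp only [Finset.mem_sup, mem_filter, id_eq, mem_univ, true_and]
      constructor
      · rintro ⟨c, ⟨hc, hall⟩, hic⟩
        exact hall i hic
      · intro hij
        refine ⟨q.part i, ⟨q.part_mem.2 (mem_univ _), fun x hx => hcut x i hx hij⟩,
          q.mem_part (mem_univ _)⟩

section glue
variable {ℓ n : ℕ}

def gfun (t : Fin (ℓ-1))
    (P : Finpartition (univ : Finset (Fin (ℓ-2-(t:ℕ)))))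
    (Q : Finpartition (univ : Finset (Fin ((t:ℕ)+1))))
    (c : Finset (Fin ((t:ℕ)+1))) (x : Fin ℓ) :
    Finset (Fin ((t:ℕ)+1)) ⊕ Finset (Fin (ℓ-2-(t:ℕ))) :=
  if h : (x:ℕ) < (t:ℕ)+1 then Sum.inl (Q.part ⟨x, h⟩)
  else if h2 : (x:ℕ) < ℓ-1 then Sum.inr (P.part ⟨(x:ℕ)-((t:ℕ)+1), by
    have := t.isLt; omega⟩)
  else Sum.inl c

def glueFP (t : Fin (ℓ-1))
    (P : Finpartition (univ : Finset (Fin (ℓ-2-(t:ℕ)))))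
    (Q : Finpartition (univ : Finset (Fin ((t:ℕ)+1))))
    (c : Finset (Fin ((t:ℕ)+1))) : Finpartition (univ : Finset (Fin ℓ)) :=
  Finpartition.ofSetoid (Setoid.ker (gfun t P Q c))

variable (t : Fin (ℓ-1))
    (P : Finpartition (univ : Finset (Fin (ℓ-2-(t:ℕ)))))
    (Q : Finpartition (univ : Finset (Fin ((t:ℕ)+1))))
    (c : Finset (Fin ((t:ℕ)+1)))

lemma glue_mem_part (a b : Fin ℓ) :
    b ∈ (glueFP t P Q c).part a ↔ gfun t P Q c a = gfun t P Q c b :=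
  mem_part_ker _ a b

lemma gfun_head (x : Fin ℓ) (h : (x:ℕ) < (t:ℕ)+1) :
    gfun t P Q c x = Sum.inl (Q.part ⟨x, h⟩) := dif_pos h

lemma gfun_mid (x : Fin ℓ) (h : ¬ (x:ℕ) < (t:ℕ)+1) (h2 : (x:ℕ) < ℓ-1) :
    gfun t P Q c x = Sum.inr (P.part ⟨(x:ℕ)-((t:ℕ)+1), by have := t.isLt; omega⟩) := by
  rw [gfun, dif_neg h, dif_pos h2]

lemma gfun_last (x : Fin ℓ) (h : (x:ℕ) = ℓ-1) :
    gfun t P Q c x = Sum.inl c := by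
  have ht := t.isLt
  rw [gfun, dif_neg (by omega), dif_neg (by omega)]

lemma glue_card (hc : c ∈ Q.parts) :
    (glueFP t P Q c).parts.card = Q.parts.card + P.parts.card := by
  have ht := t.isLt
  rw [glueFP, card_parts_ker]
  have himg : univ.image (gfun t P Q c) = Q.parts.image Sum.inl ∪ P.parts.image Sum.inr := by
    ext s
    simp only [mem_image, mem_univ, true_and, mem_union]
    constructor
    · rintro ⟨x, rfl⟩
      by_cases h : (x:ℕ) < (t:ℕ)+1
      · exact Or.inl ⟨_, Q.part_mem.2 (mem_univ _), (gfun_head t P Q c x h).symm⟩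
      · by_cases h2 : (x:ℕ) < ℓ-1
        · exact Or.inr ⟨_, P.part_mem.2 (mem_univ _), (gfun_mid t P Q c x h h2).symm⟩
        · exact Or.inl ⟨c, hc, (gfun_last t P Q c x (by omega)).symm⟩
    · rintro (⟨b, hb, rfl⟩ | ⟨b, hb, rfl⟩)
      · obtain ⟨a, ha⟩ := Q.nonempty_of_mem_parts hb
        refine ⟨⟨(a:ℕ), by have := a.isLt; omega⟩, ?_⟩
        rw [gfun_head t P Q c _ (by simp [a.isLt])]
        congr 1
        rw [Q.part_eq_of_mem hb (by simpa using ha)]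
      · obtain ⟨a, ha⟩ := P.nonempty_of_mem_parts hb
        refine ⟨⟨(t:ℕ)+1+(a:ℕ), by have := a.isLt; omega⟩, ?_⟩
        rw [gfun_mid t P Q c _ (by simp; omega) (by have := a.isLt; simp; omega)]
        congr 1
        rw [P.part_eq_of_mem hb]
        convert ha using 2
        simp
  rw [himg, Finset.card_union_of_disjoint, Finset.card_image_of_injective _ Sum.inl_injective,
    Finset.card_image_of_injective _ Sum.inr_injective]
  rw [Finset.disjoint_left]
  rintro s hs hs'
  simp only [mem_image] at hs hs'
  obtain ⟨_, _, rfl⟩ := hs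
  obtain ⟨_, _, h⟩ := hs'
  simp at h

lemma glue_not_reducible (hc : c ∈ Q.parts) (hQ : ¬ Reducible Q) :
    ¬ Reducible (glueFP t P Q c) := by
  have ht := t.isLt
  rw [reducible_iff]
  rintro ⟨j, h1, h2, hcut⟩
  obtain ⟨x₀, hx₀⟩ := Q.nonempty_of_mem_parts hc
  set x₀l : Fin ℓ := ⟨(x₀:ℕ), by have := x₀.isLt; omega⟩ with hx₀l
  have hlast : (⟨ℓ-1, by omega⟩ : Fin ℓ) ∈ (glueFP t P Q c).part x₀l := by
    rw [glue_mem_part, gfun_head t P Q c _ (by simpa using x₀.isLt),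
      gfun_last t P Q c _ (by simp)]
    congr 1
    rw [Q.part_eq_of_mem hc (by simpa using hx₀)]
  have hxj : ¬ ((x₀l : ℕ) < j) := by
    intro hlt
    have := hcut _ x₀l hlast hlt
    simp at this; omega
  apply hQ
  rw [reducible_iff]
  refine ⟨j, h1, by have := x₀.isLt; simp at hxj; have hv : (x₀l : ℕ) = x₀ := rfl; omega, fun a b hab hbj => ?_⟩
  set al : Fin ℓ := ⟨(a:ℕ), by have := a.isLt; omega⟩
  set bl : Fin ℓ := ⟨(b:ℕ), by have := b.isLt; omega⟩
  have : al ∈ (glueFP t P Q c).part bl := by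
    rw [glue_mem_part, gfun_head t P Q c _ (by simpa using b.isLt),
      gfun_head t P Q c _ (by simpa using a.isLt)]
    congr 1
    exact (Q.mem_part_iff_part_eq_part (mem_univ a) (mem_univ b)).1 hab |>.symm
  exact hcut al bl this hbj

lemma glue_sep (hc : c ∈ Q.parts) (h0 : (0 : Fin ((t:ℕ)+1)) ∉ c) (hl2 : 2 ≤ ℓ) :
    ¬ ∃ cc ∈ (glueFP t P Q c).parts,
      (⟨0, by omega⟩ : Fin ℓ) ∈ cc ∧ (⟨ℓ - 1, by omega⟩ : Fin ℓ) ∈ cc := by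
  have ht := t.isLt
  rintro ⟨cc, hcc, hz, hl⟩
  have h1 : cc = (glueFP t P Q c).part ⟨0, by omega⟩ :=
    ((glueFP t P Q c).part_eq_of_mem hcc hz).symm
  have : gfun t P Q c ⟨0, by omega⟩ = gfun t P Q c ⟨ℓ-1, by omega⟩ := by
    rw [← glue_mem_part]
    exact h1 ▸ hl
  rw [gfun_head t P Q c _ (by simp), gfun_last t P Q c _ (by simp)] at this
  have hQ0 : Q.part ⟨0, by omega⟩ = c := by simpa using this
  apply h0
  have : (0 : Fin ((t:ℕ)+1)) = ⟨0, by omega⟩ := by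
    apply Fin.ext; simp
  rw [this, ← hQ0]
  exact Q.mem_part (mem_univ _)

/-- cut after deleting the last element -/
def Cut' {L : ℕ} (q : Finpartition (Finset.univ : Finset (Fin L))) (j : ℕ) : Prop :=
  ∀ x y : Fin L, x ∈ q.part y → (x : ℕ) ≠ L-1 → (y : ℕ) < j → (x : ℕ) < j

instance {L : ℕ} (q : Finpartition (Finset.univ : Finset (Fin L))) (j : ℕ) :
    Decidable (Cut' q j) := by unfold Cut'; infer_instance

lemma glue_cut' : Cut' (glueFP t P Q c) ((t:ℕ)+1) := by
  have ht := t.isLt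
  intro x y hxy hx hy
  rw [glue_mem_part, gfun_head t P Q c y hy] at hxy
  by_contra hxu
  by_cases h2 : (x:ℕ) < ℓ-1
  · rw [gfun_mid t P Q c x hxu h2] at hxy
    simp at hxy
  · exact hx (by omega)

lemma glue_not_cut' (hQ : ¬ Reducible Q) (j : ℕ) (h1 : 1 ≤ j) (hj : j < (t:ℕ)+1) :
    ¬ Cut' (glueFP t P Q c) j := by
  have ht := t.isLt
  intro hcut
  apply hQ
  rw [reducible_iff]
  refine ⟨j, h1, hj, fun a b hab hbj => ?_⟩
  set al : Fin ℓ := ⟨(a:ℕ), by have := a.isLt; omega⟩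
  set bl : Fin ℓ := ⟨(b:ℕ), by have := b.isLt; omega⟩
  have hmem : al ∈ (glueFP t P Q c).part bl := by
    rw [glue_mem_part, gfun_head t P Q c _ (by simpa using b.isLt),
      gfun_head t P Q c _ (by simpa using a.isLt)]
    congr 1
    exact (Q.mem_part_iff_part_eq_part (mem_univ a) (mem_univ b)).1 hab |>.symm
  have := hcut al bl hmem (by have := a.isLt; have hv : (al : ℕ) = a := rfl; omega) hbj
  simpa using this

end glue

section extractsec
variable {ℓ : ℕ} (q : Finpartition (Finset.univ : Finset (Fin ℓ)))

def gQe (u : ℕ) (hu : u ≤ ℓ-1) : Fin u → Finset (Fin ℓ) :=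
  fun i => q.part ⟨(i:ℕ), by have := i.isLt; omega⟩

def exQ (u : ℕ) (hu : u ≤ ℓ-1) : Finpartition (Finset.univ : Finset (Fin u)) :=
  Finpartition.ofSetoid (Setoid.ker (gQe q u hu))

def gPe (u v : ℕ) (huv : u + v ≤ ℓ-1) : Fin v → Finset (Fin ℓ) :=
  fun i => q.part ⟨u+(i:ℕ), by have := i.isLt; omega⟩

def exP (u v : ℕ) (huv : u + v ≤ ℓ-1) : Finpartition (Finset.univ : Finset (Fin v)) :=
  Finpartition.ofSetoid (Setoid.ker (gPe q u v huv))

variable (hℓ : 2 ≤ ℓ)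

def exC (u : ℕ) (hu : u ≤ ℓ-1) : Finset (Fin u) :=
  univ.filter (fun i => q.part ⟨(i:ℕ), by have := i.isLt; omega⟩ = q.part ⟨ℓ-1, by omega⟩)

variable (hirr : ¬ Reducible q)
    (hsep : ¬ ∃ cc ∈ q.parts, (⟨0, by omega⟩ : Fin ℓ) ∈ cc ∧ (⟨ℓ - 1, by omega⟩ : Fin ℓ) ∈ cc)

-- (Ea) the part of the last element contains a non-last element
include hℓ hirr in
lemma exists_nonlast : ∃ x : Fin ℓ, x ∈ q.part ⟨ℓ-1, by omega⟩ ∧ (x:ℕ) ≠ ℓ-1 := by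
  by_contra hne
  push_neg at hne
  apply hirr
  rw [reducible_iff]
  refine ⟨ℓ-1, by omega, by omega, fun x y hxy hy => ?_⟩
  rcases Nat.lt_or_ge (x:ℕ) (ℓ-1) with h | h
  · exact h
  · exfalso
    have hxl : x = ⟨ℓ-1, by omega⟩ := by apply Fin.ext; have := x.isLt; simp; omega
    rw [hxl] at hxy
    have hpy : q.part y = q.part ⟨ℓ-1, by omega⟩ := by
      rw [← (q.mem_part_iff_part_eq_part (mem_univ _) (mem_univ y)).1 hxy]
    have : y ∈ q.part ⟨ℓ-1, by omega⟩ := hpy ▸ q.mem_part (mem_univ y)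
    have := hne y this
    omega

-- (Eb) all non-last elements of the last part are in the head
include hℓ hirr in
lemma lastpart_head (u : ℕ) (hu1 : 1 ≤ u) (hu : u ≤ ℓ-1) (hcu : Cut' q u) :
    ∀ x : Fin ℓ, x ∈ q.part ⟨ℓ-1, by omega⟩ → (x:ℕ) ≠ ℓ-1 → (x:ℕ) < u := by
  by_contra hne
  push_neg at hne
  obtain ⟨y, hyD, hyne, hyu⟩ := hne
  -- (i) no element of D other than last is < u
  have hi : ∀ x : Fin ℓ, x ∈ q.part ⟨ℓ-1, by omega⟩ → (x:ℕ) ≠ ℓ-1 → ¬ ((x:ℕ) < u) := by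
    intro x hxD hxne hxu
    have hpx : q.part x = q.part ⟨ℓ-1, by omega⟩ :=
      (q.mem_part_iff_part_eq_part (mem_univ x) (mem_univ _)).1 hxD
    have hyx : y ∈ q.part x := hpx ▸ hyD
    exact absurd (hcu y x hyx hyne hxu) (by omega)
  apply hirr
  rw [reducible_iff]
  refine ⟨u, hu1, by omega, fun a b hab hbu => ?_⟩
  -- b is not in D
  have hbD : b ∉ q.part ⟨ℓ-1, by omega⟩ := fun hbD =>
    hi b hbD (by omega) hbu
  by_cases ha : (a:ℕ) = ℓ-1
  · exfalso
    have hal : a = ⟨ℓ-1, by omega⟩ := by apply Fin.ext; simpa using ha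
    rw [hal] at hab
    have : q.part b = q.part ⟨ℓ-1, by omega⟩ :=
      ((q.mem_part_iff_part_eq_part (mem_univ _) (mem_univ b)).1 hab).symm
    exact hbD (this ▸ q.mem_part (mem_univ b))
  · exact hcu a b hab ha hbu

-- non-last-parts are closed below u
include hℓ in
lemma head_closed (u : ℕ) (hcu : Cut' q u) :
    ∀ x y : Fin ℓ, x ∈ q.part y → (y:ℕ) < u → q.part y ≠ q.part ⟨ℓ-1, by omega⟩ →
      (x:ℕ) < u := by
  intro x y hxy hyu hD
  by_cases hx : (x:ℕ) = ℓ-1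
  · exfalso
    apply hD
    have hxl : x = ⟨ℓ-1, by omega⟩ := by apply Fin.ext; simpa using hx
    rw [← (q.mem_part_iff_part_eq_part (mem_univ x) (mem_univ y)).1 hxy, hxl]
  · exact hcu x y hxy hx hyu

lemma exQ_mem_part (u : ℕ) (hu : u ≤ ℓ-1) (a b : Fin u) :
    b ∈ (exQ q u hu).part a ↔
      q.part ⟨(a:ℕ), by have := a.isLt; omega⟩ = q.part ⟨(b:ℕ), by have := b.isLt; omega⟩ :=
  mem_part_ker _ a b

lemma exP_mem_part (u v : ℕ) (huv : u + v ≤ ℓ-1) (a b : Fin v) :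
    b ∈ (exP q u v huv).part a ↔
      q.part ⟨u+(a:ℕ), by have := a.isLt; omega⟩ = q.part ⟨u+(b:ℕ), by have := b.isLt; omega⟩ :=
  mem_part_ker _ a b

lemma exQ_image (u : ℕ) (hu : u ≤ ℓ-1) :
    univ.image (gQe q u hu) = q.parts.filter (fun b => ∃ x : Fin ℓ, x ∈ b ∧ (x:ℕ) < u) := by
  ext b
  simp only [mem_image, mem_univ, true_and, mem_filter]
  constructor
  · rintro ⟨i, rfl⟩
    exact ⟨q.part_mem.2 (mem_univ _), ⟨⟨(i:ℕ), by have := i.isLt; omega⟩,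
      q.mem_part (mem_univ _), by simpa using i.isLt⟩⟩
  · rintro ⟨hb, x, hxb, hxu⟩
    refine ⟨⟨(x:ℕ), hxu⟩, ?_⟩
    show q.part _ = b
    rw [q.part_eq_of_mem hb (show x ∈ b from hxb) |>.symm]

lemma exP_image (u v : ℕ) (huv : u + v = ℓ-1) :
    univ.image (gPe q u v (le_of_eq huv)) =
      q.parts.filter (fun b => ∃ x : Fin ℓ, x ∈ b ∧ u ≤ (x:ℕ) ∧ (x:ℕ) < ℓ-1) := by
  ext b
  simp only [mem_image, mem_univ, true_and, mem_filter]
  constructor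
  · rintro ⟨i, rfl⟩
    exact ⟨q.part_mem.2 (mem_univ _), ⟨⟨u+(i:ℕ), by have := i.isLt; omega⟩,
      q.mem_part (mem_univ _), by simp, by have := i.isLt; simp; omega⟩⟩
  · rintro ⟨hb, x, hxb, hxu, hxl⟩
    refine ⟨⟨(x:ℕ)-u, by omega⟩, ?_⟩
    show q.part _ = b
    rw [q.part_eq_of_mem hb (show x ∈ b from hxb) |>.symm]
    congr 1
    apply Fin.ext
    simp
    omega

include hℓ hirr in
lemma parts_card_split (u v : ℕ) (hu1 : 1 ≤ u) (huv : u + v = ℓ-1) (hcu : Cut' q u) :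
    (exQ q u (by omega)).parts.card + (exP q u v (le_of_eq huv)).parts.card
      = q.parts.card := by
  rw [exQ, exP, card_parts_ker, card_parts_ker, exQ_image, exP_image q u v huv]
  rw [← Finset.card_union_of_disjoint ?hdisj]
  case hdisj =>
    rw [Finset.disjoint_left]
    rintro b hb1 hb2
    simp only [mem_filter] at hb1 hb2
    obtain ⟨hb, x, hxb, hxu⟩ := hb1
    obtain ⟨-, y, hyb, hyu, hyl⟩ := hb2
    by_cases hD : b = q.part ⟨ℓ-1, by omega⟩
    · have := lastpart_head q hℓ hirr u hu1 (by omega) hcu y (hD ▸ hyb) (by omega)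
      omega
    · have hbx : b = q.part x := (q.part_eq_of_mem hb hxb).symm
      have hyx : y ∈ q.part x := hbx ▸ hyb
      have := hcu y x hyx (by omega) hxu
      omega
  congr 1
  apply Finset.Subset.antisymm
  · intro b hb
    rw [Finset.mem_union, mem_filter, mem_filter] at hb
    rcases hb with ⟨hb, -⟩ | ⟨hb, -⟩ <;> exact hb
  · intro b hb
    rw [Finset.mem_union]
    by_cases hD : b = q.part ⟨ℓ-1, by omega⟩
    · obtain ⟨x, hxD, hxl⟩ := exists_nonlast q hℓ hirr
      have hxu := lastpart_head q hℓ hirr u hu1 (by omega) hcu x hxD hxl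
      exact Or.inl (mem_filter.2 ⟨hb, x, hD ▸ hxD, hxu⟩)
    · obtain ⟨x₀, hx₀⟩ := q.nonempty_of_mem_parts hb
      by_cases hx₀u : (x₀:ℕ) < u
      · exact Or.inl (mem_filter.2 ⟨hb, x₀, hx₀, hx₀u⟩)
      · refine Or.inr (mem_filter.2 ⟨hb, x₀, hx₀, by omega, ?_⟩)
        by_contra hge
        have hx₀l : x₀ = ⟨ℓ-1, by omega⟩ := by
          apply Fin.ext; have := x₀.isLt; simp; omega
        apply hD
        rw [← q.part_eq_of_mem hb hx₀, hx₀l]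

include hℓ hirr hsep in
lemma two_le_exQ (u : ℕ) (hu1 : 1 ≤ u) (hu : u ≤ ℓ-1) (hcu : Cut' q u) :
    2 ≤ (exQ q u hu).parts.card := by
  rw [exQ, card_parts_ker, exQ_image]
  obtain ⟨x, hxD, hxl⟩ := exists_nonlast q hℓ hirr
  have hxu := lastpart_head q hℓ hirr u hu1 hu hcu x hxD hxl
  have h1 : q.part ⟨ℓ-1, by omega⟩ ∈ q.parts.filter (fun b => ∃ x : Fin ℓ, x ∈ b ∧ (x:ℕ) < u) :=
    mem_filter.2 ⟨q.part_mem.2 (mem_univ _), x, hxD, hxu⟩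
  have h2 : q.part ⟨0, by omega⟩ ∈ q.parts.filter (fun b => ∃ x : Fin ℓ, x ∈ b ∧ (x:ℕ) < u) :=
    mem_filter.2 ⟨q.part_mem.2 (mem_univ _), ⟨0, by omega⟩, q.mem_part (mem_univ _), by simp; omega⟩
  have hne : q.part ⟨0, by omega⟩ ≠ q.part ⟨ℓ-1, by omega⟩ := by
    intro he
    exact hsep ⟨q.part ⟨0, by omega⟩, q.part_mem.2 (mem_univ _), q.mem_part (mem_univ _),
      by rw [he]; exact q.mem_part (mem_univ _)⟩
  have := Finset.one_lt_card.2 ⟨_, h2, _, h1, hne⟩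
  omega

include hℓ hirr in
lemma exQ_not_red (u : ℕ) (hu1 : 1 ≤ u) (hu : u ≤ ℓ-1) (hcu : Cut' q u)
    (hmin : ∀ j, 1 ≤ j → j < u → ¬ Cut' q j) :
    ¬ Reducible (exQ q u hu) := by
  rw [reducible_iff]
  rintro ⟨j, h1, h2, hcut⟩
  apply hmin j h1 h2
  intro x y hxy hxl hyj
  have hyu : (y:ℕ) < u := by omega
  have hxu : (x:ℕ) < u := by
    by_cases hD : q.part y = q.part ⟨ℓ-1, by omega⟩
    · exact lastpart_head q hℓ hirr u hu1 hu hcu x (hD ▸ hxy) hxl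
    · exact head_closed q hℓ u hcu x y hxy hyu hD
  have hmem : (⟨(x:ℕ), hxu⟩ : Fin u) ∈ (exQ q u hu).part ⟨(y:ℕ), hyu⟩ := by
    rw [exQ_mem_part q hℓ]
    simp only [Fin.eta]
    exact ((q.mem_part_iff_part_eq_part (mem_univ x) (mem_univ y)).1 hxy).symm
  exact hcut _ _ hmem hyj

include hℓ hirr in
lemma exC_mem (u : ℕ) (hu1 : 1 ≤ u) (hu : u ≤ ℓ-1) (hcu : Cut' q u) :
    exC q hℓ u hu ∈ (exQ q u hu).parts := by
  obtain ⟨x, hxD, hxl⟩ := exists_nonlast q hℓ hirr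
  have hxu := lastpart_head q hℓ hirr u hu1 hu hcu x hxD hxl
  have : exC q hℓ u hu = (exQ q u hu).part ⟨(x:ℕ), hxu⟩ := by
    ext b
    rw [exQ_mem_part q hℓ, exC, mem_filter]
    simp only [mem_univ, true_and, Fin.eta]
    rw [q.part_eq_of_mem (q.part_mem.2 (mem_univ _)) hxD]
    exact eq_comm
  rw [this]
  exact (exQ q u hu).part_mem.2 (mem_univ _)

include hℓ hsep in
lemma zero_not_mem_exC (u : ℕ) (hu : u ≤ ℓ-1) (i : Fin u) (hi : (i:ℕ) = 0) :
    i ∉ exC q hℓ u hu := by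
  rw [exC, mem_filter]
  rintro ⟨-, he⟩
  apply hsep
  refine ⟨q.part ⟨(i:ℕ), by have := i.isLt; omega⟩, q.part_mem.2 (mem_univ _), ?_, ?_⟩
  · have : (⟨0, by omega⟩ : Fin ℓ) = ⟨(i:ℕ), by have := i.isLt; omega⟩ := by
      apply Fin.ext; simp [hi]
    rw [this]
    exact q.mem_part (mem_univ _)
  · exact he ▸ q.mem_part (mem_univ _)

include hℓ hirr in
lemma glue_extract_eq (t : Fin (ℓ-1)) (hcu : Cut' q ((t:ℕ)+1)) :
    glueFP t (exP q ((t:ℕ)+1) (ℓ-2-(t:ℕ)) (by have := t.isLt; omega))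
      (exQ q ((t:ℕ)+1) (by have := t.isLt; omega))
      (exC q hℓ ((t:ℕ)+1) (by have := t.isLt; omega)) = q := by
  have ht := t.isLt
  set u : ℕ := (t:ℕ)+1 with hudef
  have hu : u ≤ ℓ-1 := by omega
  have hu1 : 1 ≤ u := by omega
  have hEb := lastpart_head q hℓ hirr u hu1 hu hcu
  have hCmem := exC_mem q hℓ hirr u hu1 (by omega) hcu
  set P := exP q u (ℓ-2-(t:ℕ)) (by omega) with hPdef
  set Q := exQ q u (by omega : u ≤ ℓ-1) with hQdef
  set C := exC q hℓ u (by omega : u ≤ ℓ-1) with hCdef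
  have key : ∀ a b : Fin ℓ, gfun t P Q C a = gfun t P Q C b ↔ q.part a = q.part b := by
    have qQ : ∀ (a b : Fin ℓ) (ha : (a:ℕ) < u) (hb : (b:ℕ) < u),
        (Q.part ⟨(a:ℕ), ha⟩ = Q.part ⟨(b:ℕ), hb⟩) ↔ q.part a = q.part b := by
      intro a b ha hb
      rw [hQdef, exQ, part_ker_eq_iff]
      show q.part ⟨(a:ℕ), _⟩ = q.part ⟨(b:ℕ), _⟩ ↔ _
      simp [Fin.eta]
    have qC : ∀ (a : Fin ℓ) (ha : (a:ℕ) < u),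
        (Q.part ⟨(a:ℕ), ha⟩ = C) ↔ q.part a = q.part ⟨ℓ-1, by omega⟩ := by
      intro a ha
      constructor
      · intro h
        have : (⟨(a:ℕ), ha⟩ : Fin u) ∈ C := h ▸ Q.mem_part (mem_univ _)
        rw [hCdef, exC, mem_filter] at this
        simpa using this.2
      · intro h
        have hmem : (⟨(a:ℕ), ha⟩ : Fin u) ∈ C := by
          rw [hCdef, exC, mem_filter]
          exact ⟨mem_univ _, by simpa using h⟩
        exact Q.part_eq_of_mem hCmem hmem
    -- case when one is in the middle region : same part iff
    have qMid : ∀ (a b : Fin ℓ), ¬ (a:ℕ) < u → (a:ℕ) < ℓ-1 →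
        q.part a = q.part b → ((b:ℕ) < u ∨ (b:ℕ) = ℓ-1) → False := by
      intro a b hau hal hpart hb
      have hab : a ∈ q.part b := hpart ▸ q.mem_part (mem_univ a)
      rcases hb with hb | hb
      · by_cases hD : q.part b = q.part ⟨ℓ-1, by omega⟩
        · exact hau (hEb a (hD ▸ hab) (by omega))
        · exact hau (head_closed q hℓ u hcu a b hab hb hD)
      · have hbl : b = ⟨ℓ-1, by omega⟩ := Fin.ext (by simpa using hb)
        rw [hbl] at hab
        exact hau (hEb a hab (by omega))
    intro a b
    by_cases ha : (a:ℕ) < u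
    · by_cases hb : (b:ℕ) < u
      · rw [gfun_head t P Q C a ha, gfun_head t P Q C b hb]
        simp only [Sum.inl.injEq]
        exact qQ a b ha hb
      · by_cases hb2 : (b:ℕ) < ℓ-1
        · rw [gfun_head t P Q C a ha, gfun_mid t P Q C b hb hb2]
          exact iff_of_false (fun h => by simp at h)
            (fun h => qMid b a hb hb2 h.symm (Or.inl ha))
        · have hbl : b = ⟨ℓ-1, by omega⟩ := Fin.ext (by simp; omega)
          rw [gfun_head t P Q C a ha, gfun_last t P Q C b (by omega)]
          simp only [Sum.inl.injEq]
          rw [qC a ha, hbl]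
    · by_cases ha2 : (a:ℕ) < ℓ-1
      · by_cases hb : (b:ℕ) < u
        · rw [gfun_mid t P Q C a ha ha2, gfun_head t P Q C b hb]
          exact iff_of_false (fun h => by simp at h)
            (fun h => qMid a b ha ha2 h (Or.inl hb))
        · by_cases hb2 : (b:ℕ) < ℓ-1
          · rw [gfun_mid t P Q C a ha ha2, gfun_mid t P Q C b hb hb2]
            simp only [Sum.inr.injEq]
            rw [hPdef, exP, part_ker_eq_iff]
            show q.part ⟨u+((a:ℕ)-u), _⟩ = q.part ⟨u+((b:ℕ)-u), _⟩ ↔ _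
            have e1 : (⟨u+((a:ℕ)-u), by omega⟩ : Fin ℓ) = a := Fin.ext (by simp; omega)
            have e2 : (⟨u+((b:ℕ)-u), by omega⟩ : Fin ℓ) = b := Fin.ext (by simp; omega)
            rw [e1, e2]
          · rw [gfun_mid t P Q C a ha ha2, gfun_last t P Q C b (by omega)]
            exact iff_of_false (fun h => by simp at h)
              (fun h => qMid a b ha ha2 h (Or.inr (by omega)))
      · by_cases hb : (b:ℕ) < u
        · have hal : a = ⟨ℓ-1, by omega⟩ := Fin.ext (by simp; omega)
          rw [gfun_last t P Q C a (by omega), gfun_head t P Q C b hb]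
          simp only [Sum.inl.injEq]
          rw [eq_comm, qC b hb, hal, eq_comm]
        · by_cases hb2 : (b:ℕ) < ℓ-1
          · rw [gfun_last t P Q C a (by omega), gfun_mid t P Q C b hb hb2]
            exact iff_of_false (fun h => by simp at h)
              (fun h => qMid b a hb hb2 h.symm (Or.inr (by omega)))
          · have hab : a = b := Fin.ext (by omega)
            rw [hab]
            simp
  apply eq_of_part_eq
  intro a
  ext b
  rw [glue_mem_part, key a b, eq_comm,
    ← q.mem_part_iff_part_eq_part (mem_univ b) (mem_univ a)]

end extractsec

section roundtrip
variable {ℓ n : ℕ} (hℓ : 2 ≤ ℓ) (t : Fin (ℓ-1))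
    (P : Finpartition (univ : Finset (Fin (ℓ-2-(t:ℕ)))))
    (Q : Finpartition (univ : Finset (Fin ((t:ℕ)+1))))
    (c : Finset (Fin ((t:ℕ)+1)))

lemma glue_part_eq_iff (a b : Fin ℓ) :
    (glueFP t P Q c).part a = (glueFP t P Q c).part b ↔
      gfun t P Q c a = gfun t P Q c b :=
  part_ker_eq_iff _ a b

include hℓ in
lemma exQ_glue :
    exQ (glueFP t P Q c) ((t:ℕ)+1) (by have := t.isLt; omega) = Q := by
  have ht := t.isLt
  apply eq_of_part_eq
  intro a
  ext b
  rw [exQ_mem_part (glueFP t P Q c) hℓ, glue_part_eq_iff,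
    gfun_head t P Q c _ (by have := a.isLt; simpa using a.isLt),
    gfun_head t P Q c _ (by have := b.isLt; simpa using b.isLt)]
  simp only [Sum.inl.injEq, Fin.eta]
  exact ⟨fun h => by rw [h]; exact Q.mem_part (mem_univ b),
    fun h => ((Q.mem_part_iff_part_eq_part (mem_univ b) (mem_univ a)).1 h).symm⟩

include hℓ in
lemma gfun_mid_eval (a : Fin (ℓ-2-(t:ℕ))) :
    gfun t P Q c ⟨(t:ℕ)+1+(a:ℕ), by have := t.isLt; have := a.isLt; omega⟩
      = Sum.inr (P.part a) := by
  have ht := t.isLt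
  have ha := a.isLt
  rw [gfun_mid t P Q c _ (by simp; omega) (by simp; omega)]
  congr 2
  apply Fin.ext
  simp

include hℓ in
lemma exP_glue :
    exP (glueFP t P Q c) ((t:ℕ)+1) (ℓ-2-(t:ℕ)) (by have := t.isLt; omega) = P := by
  have ht := t.isLt
  apply eq_of_part_eq
  intro a
  ext b
  rw [exP_mem_part (glueFP t P Q c) hℓ, glue_part_eq_iff, gfun_mid_eval hℓ t P Q c a,
    gfun_mid_eval hℓ t P Q c b]
  simp only [Sum.inr.injEq]
  exact ⟨fun h => by rw [h]; exact P.mem_part (mem_univ b),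
    fun h => ((P.mem_part_iff_part_eq_part (mem_univ b) (mem_univ a)).1 h).symm⟩

include hℓ in
lemma exC_glue (hc : c ∈ Q.parts) :
    exC (glueFP t P Q c) hℓ ((t:ℕ)+1) (by have := t.isLt; omega) = c := by
  have ht := t.isLt
  ext i
  rw [exC, mem_filter]
  simp only [mem_univ, true_and]
  rw [glue_part_eq_iff,
    gfun_head t P Q c _ (by simpa using i.isLt),
    gfun_last t P Q c _ (by simp)]
  simp only [Sum.inl.injEq, Fin.eta]
  constructor
  · intro h
    exact h ▸ Q.mem_part (mem_univ i)
  · intro h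
    exact Q.part_eq_of_mem hc h

lemma glue_find (hQ : ¬ Reducible Q)
    (hex : ∃ j, 1 ≤ j ∧ Cut' (glueFP t P Q c) j) :
    Nat.find hex = (t:ℕ)+1 := by
  rw [Nat.find_eq_iff]
  refine ⟨⟨by omega, glue_cut' t P Q c⟩, fun j hj => ?_⟩
  rintro ⟨h1, hcj⟩
  exact glue_not_cut' t P Q c hQ j h1 hj hcj

end roundtrip

def YT (ℓ n : ℕ) : Type :=
  Σ (t : Fin (ℓ-1)) (m : Fin (n-1)),
    {P : Finpartition (univ : Finset (Fin (ℓ-2-(t:ℕ)))) // P.parts.card = (m:ℕ)} ×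
    (Σ Q : {Q : Finpartition (univ : Finset (Fin ((t:ℕ)+1))) //
        Q.parts.card = n-(m:ℕ) ∧ ¬ Reducible Q},
      {c : Finset (Fin ((t:ℕ)+1)) // c ∈ Q.1.parts ∧ (0 : Fin ((t:ℕ)+1)) ∉ c})

def GLfun (ℓ n : ℕ) (hℓ : 2 ≤ ℓ) (y : YT ℓ n) :
    {q : Finpartition (Finset.univ : Finset (Fin ℓ)) //
        q.parts.card = n ∧ ¬ Reducible q ∧
        ¬ ∃ c ∈ q.parts, (⟨0, by omega⟩ : Fin ℓ) ∈ c ∧ (⟨ℓ - 1, by omega⟩ : Fin ℓ) ∈ c} := by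
  obtain ⟨t, m, ⟨P, hP⟩, ⟨⟨Q, hQ⟩, ⟨c, hc⟩⟩⟩ := y
  refine ⟨glueFP t P Q c, ?_, ?_, ?_⟩
  · rw [glue_card t P Q c hc.1, hQ.1, hP]
    have := m.isLt
    omega
  · exact glue_not_reducible t P Q c hc.1 hQ.2
  · exact glue_sep t P Q c hc.1 hc.2 hℓ

lemma GLfun_bij (ℓ n : ℕ) (hℓ : 2 ≤ ℓ) (hn : 2 ≤ n) :
    Function.Bijective (GLfun ℓ n hℓ) := by
  constructor
  · rintro ⟨t, m, ⟨P, hP⟩, ⟨⟨Q, hQ⟩, ⟨c, hc⟩⟩⟩ ⟨t', m', ⟨P', hP'⟩, ⟨⟨Q', hQ'⟩, ⟨c', hc'⟩⟩⟩ h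
    simp only [GLfun, Subtype.mk.injEq] at h
    -- first component
    have ht : t = t' := by
      have ha : Cut' (glueFP t' P' Q' c') ((t:ℕ)+1) := h ▸ glue_cut' t P Q c
      have hb : Cut' (glueFP t P Q c) ((t':ℕ)+1) := by
        rw [h]; exact glue_cut' t' P' Q' c'
      apply Fin.ext
      rcases Nat.lt_trichotomy (t:ℕ) (t':ℕ) with hlt | he | hgt
      · exact absurd ha (glue_not_cut' t' P' Q' c' hQ'.2 _ (by omega) (by omega))
      · exact he
      · exact absurd hb (glue_not_cut' t P Q c hQ.2 _ (by omega) (by omega))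
    subst ht
    have hQeq : Q = Q' := by
      rw [← exQ_glue hℓ t P Q c, h, exQ_glue hℓ t P' Q' c']
    subst hQeq
    have hPeq : P = P' := by
      rw [← exP_glue hℓ t P Q c, h, exP_glue hℓ t P' Q c']
    subst hPeq
    have hceq : c = c' := by
      rw [← exC_glue hℓ t P Q c hc.1, h, exC_glue hℓ t P Q c' hc'.1]
    subst hceq
    have hm : m = m' := by
      apply Fin.ext
      omega
    subst hm
    rfl
  · rintro ⟨q, hcard, hirr, hsep⟩
    have htriv : ∀ j : ℕ, j = ℓ-1 → Cut' q j := by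
      rintro j rfl
      intro x y _ hx _
      have := x.isLt
      omega
    have hex : ∃ j, 1 ≤ j ∧ Cut' q j := ⟨ℓ-1, by omega, htriv _ rfl⟩
    obtain ⟨hu1, hcu⟩ := Nat.find_spec hex
    have hu : Nat.find hex ≤ ℓ-1 := Nat.find_min' hex ⟨by omega, htriv _ rfl⟩
    have hmin : ∀ j, 1 ≤ j → j < Nat.find hex → ¬ Cut' q j := fun j h1 hj hcj =>
      Nat.find_min hex hj ⟨h1, hcj⟩
    set t : Fin (ℓ-1) := ⟨Nat.find hex - 1, by omega⟩ with ht_def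
    have htu : (t:ℕ)+1 = Nat.find hex := by
      have h0 : (t:ℕ) = Nat.find hex - 1 := rfl
      omega
    have hcu' : Cut' q ((t:ℕ)+1) := htu ▸ hcu
    have htl : (t:ℕ)+1 ≤ ℓ-1 := by omega
    set Q0 := exQ q ((t:ℕ)+1) htl with hQ0
    set P0 := exP q ((t:ℕ)+1) (ℓ-2-(t:ℕ)) (by omega) with hP0
    set C0 := exC q hℓ ((t:ℕ)+1) htl with hC0
    have hsplit : Q0.parts.card + P0.parts.card = q.parts.card :=
      parts_card_split q hℓ hirr ((t:ℕ)+1) (ℓ-2-(t:ℕ)) (by omega) (by omega) hcu'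
    have h2Q : 2 ≤ Q0.parts.card :=
      two_le_exQ q hℓ hirr hsep ((t:ℕ)+1) (by omega) htl hcu'
    have hQnr : ¬ Reducible Q0 :=
      exQ_not_red q hℓ hirr ((t:ℕ)+1) (by omega) htl hcu'
        (fun j h1 hj => hmin j h1 (by omega))
    have hCm : C0 ∈ Q0.parts := exC_mem q hℓ hirr ((t:ℕ)+1) (by omega) htl hcu'
    have hC0' : (0 : Fin ((t:ℕ)+1)) ∉ C0 :=
      zero_not_mem_exC q hℓ hsep ((t:ℕ)+1) htl 0 (by simp)
    refine ⟨⟨t, ⟨n - Q0.parts.card, by omega⟩, ⟨P0, by simp; omega⟩,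
      ⟨⟨Q0, by simp; omega, hQnr⟩, ⟨C0, hCm, hC0'⟩⟩⟩, ?_⟩
    apply Subtype.ext
    show glueFP t P0 Q0 C0 = q
    exact glue_extract_eq q hℓ hirr t hcu'

lemma nat_card_sigma {ι : Type*} [Fintype ι] {f : ι → Type*} [∀ i, Finite (f i)] :
    Nat.card (Σ i, f i) = ∑ i, Nat.card (f i) := by
  letI : ∀ i, Fintype (f i) := fun i => Fintype.ofFinite _
  rw [Nat.card_eq_fintype_card, Fintype.card_sigma]
  exact Finset.sum_congr rfl fun i _ => (Nat.card_eq_fintype_card).symm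

lemma card_c {u : ℕ} (Q : Finpartition (univ : Finset (Fin (u+1)))) :
    Nat.card {c : Finset (Fin (u+1)) // c ∈ Q.parts ∧ (0 : Fin (u+1)) ∉ c}
      = Q.parts.card - 1 := by
  have h0 : Q.part 0 ∈ Q.parts := Q.part_mem.2 (mem_univ _)
  have hiff : ∀ c : Finset (Fin (u+1)),
      (c ∈ Q.parts ∧ (0 : Fin (u+1)) ∉ c) ↔ c ∈ Q.parts.erase (Q.part 0) := by
    intro c
    rw [Finset.mem_erase]
    constructor
    · rintro ⟨hc, h0c⟩
      exact ⟨fun he => h0c (he ▸ Q.mem_part (mem_univ _)), hc⟩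
    · rintro ⟨hne, hc⟩
      exact ⟨hc, fun h0c => hne (Q.part_eq_of_mem hc h0c).symm⟩
  rw [Nat.card_congr (Equiv.subtypeEquivRight hiff), Nat.card_eq_finsetCard,
    Finset.card_erase_of_mem h0]

lemma card_YT (ℓ n : ℕ) (hℓ : 2 ≤ ℓ) (hn : 2 ≤ n) :
    Nat.card (YT ℓ n) = ∑ j ∈ Finset.range (ℓ - 1), ∑ m ∈ Finset.range (n - 1),
      S j m * I (ℓ - j - 1) (n - m) * (n - m - 1) := by
  have step1 : Nat.card (YT ℓ n) = ∑ t : Fin (ℓ-1), ∑ m : Fin (n-1),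
      S (ℓ-2-(t:ℕ)) (m:ℕ) * (I ((t:ℕ)+1) (n-(m:ℕ)) * (n-(m:ℕ)-1)) := by
    unfold YT
    rw [nat_card_sigma]
    refine Finset.sum_congr rfl fun t _ => ?_
    rw [nat_card_sigma]
    refine Finset.sum_congr rfl fun m _ => ?_
    rw [Nat.card_prod]
    congr 1
    letI : Fintype {Q : Finpartition (univ : Finset (Fin ((t:ℕ)+1))) //
        Q.parts.card = n-(m:ℕ) ∧ ¬ Reducible Q} := Fintype.ofFinite _
    rw [nat_card_sigma]
    have hconst : ∀ Q : {Q : Finpartition (univ : Finset (Fin ((t:ℕ)+1))) //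
        Q.parts.card = n-(m:ℕ) ∧ ¬ Reducible Q},
        Nat.card {c : Finset (Fin ((t:ℕ)+1)) // c ∈ Q.1.parts ∧ (0 : Fin ((t:ℕ)+1)) ∉ c}
          = n-(m:ℕ)-1 := by
      intro Q
      rw [card_c Q.1, Q.2.1]
    rw [Finset.sum_congr rfl fun Q _ => hconst Q, Finset.sum_const, smul_eq_mul,
      Finset.card_univ, ← Nat.card_eq_fintype_card]
    rfl
  rw [step1]
  rw [Fin.sum_univ_eq_sum_range (fun j => ∑ m : Fin (n-1),
      S (ℓ-2-j) (m:ℕ) * (I (j+1) (n-(m:ℕ)) * (n-(m:ℕ)-1))) (ℓ-1)]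
  rw [← Finset.sum_range_reflect (fun j => ∑ m ∈ Finset.range (n - 1),
      S j m * I (ℓ - j - 1) (n - m) * (n - m - 1)) (ℓ-1)]
  refine Finset.sum_congr rfl fun j hj => ?_
  rw [Finset.mem_range] at hj
  rw [Fin.sum_univ_eq_sum_range (fun m => S (ℓ-2-j) m * (I (j+1) (n-m) * (n-m-1))) (n-1)]
  refine Finset.sum_congr rfl fun m hm => ?_
  have e2 : ℓ-(ℓ-1-1-j)-1 = j+1 := by omega
  have e1 : ℓ-1-1-j = ℓ-2-j := by omega
  rw [e2, e1, mul_assoc]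


/-- The number of irreducible `n`-partitions of `Fin ℓ` in which `0` and `ℓ-1` lie in
different blocks. -/
theorem card_irreducible_partitions_different_blocks (ℓ n : ℕ) (hℓ : 2 ≤ ℓ) (hn : 2 ≤ n) :
    Nat.card {q : Finpartition (Finset.univ : Finset (Fin ℓ)) //
        q.parts.card = n ∧ ¬ Reducible q ∧
        ¬ ∃ c ∈ q.parts, (⟨0, by omega⟩ : Fin ℓ) ∈ c ∧ (⟨ℓ - 1, by omega⟩ : Fin ℓ) ∈ c}
      = ∑ j ∈ Finset.range (ℓ - 1), ∑ m ∈ Finset.range (n - 1),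
          S j m * I (ℓ - j - 1) (n - m) * (n - m - 1) := by

  have h1 : Nat.card {q : Finpartition (Finset.univ : Finset (Fin ℓ)) //
        q.parts.card = n ∧ ¬ Reducible q ∧
        ¬ ∃ c ∈ q.parts, (⟨0, by omega⟩ : Fin ℓ) ∈ c ∧ (⟨ℓ - 1, by omega⟩ : Fin ℓ) ∈ c}
      = Nat.card (YT ℓ n) :=
    (Nat.card_eq_of_bijective (GLfun ℓ n hℓ) (GLfun_bij ℓ n hℓ hn)).symm
  rw [h1, card_YT ℓ n hℓ hn]
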